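/- Let F_x(z) = z^{-2} exp(−z² − 1/(xz) + i z⁴). For each fixed x > 0, ∫₄^∞ F_x(r) dr = e^{iπ/8} ∫₄^∞ F_x(r e^{iπ/8}) dr + ∫₀^{π/8} F_x(4 e^{iθ}) · 4i e^{iθ} dθ. -/

import Mathlib

open Real Set intervalIntegral Complex MeasureTheory

noncomputable def Fx (x : ℝ) (z : ℂ) : ℂ :=
  (z ^ 2)⁻¹ * Complex.exp (-z ^ 2 - 1 / ((x:ℂ) * z) + Complex.I * z ^ 4)

lemma aux_re (r t : ℝ) : ((r:ℂ) * Complex.exp (Complex.I * t)).re = r * Real.cos t := by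
  rw [mul_comm Complex.I]; simp [Complex.exp_ofReal_mul_I_re]

lemma aux_im (r t : ℝ) : ((r:ℂ) * Complex.exp (Complex.I * t)).im = r * Real.sin t := by
  rw [mul_comm Complex.I]; simp [Complex.exp_ofReal_mul_I_im]

lemma aux_pow (n : ℕ) (r t : ℝ) : ((r:ℂ) * Complex.exp (Complex.I * t))^n
    = ((r^n : ℝ) : ℂ) * Complex.exp (Complex.I * ((n * t : ℝ) : ℂ)) := by
  rw [mul_pow, ← Complex.exp_nat_mul]; push_cast; ring_nf

lemma aux_rebound {x ρ θ : ℝ} (hx : 0 < x) (hρ : 0 < ρ) (hθ0 : 0 ≤ θ) (hθ1 : θ ≤ π/8) :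
    (-((ρ:ℂ) * Complex.exp (Complex.I * θ)) ^ 2
      - 1 / ((x:ℂ) * ((ρ:ℂ) * Complex.exp (Complex.I * θ)))
      + Complex.I * ((ρ:ℂ) * Complex.exp (Complex.I * θ)) ^ 4).re ≤ 0 := by
  have h2 : ((ρ:ℂ) * Complex.exp (Complex.I * θ))^2
      = ((ρ^2 : ℝ) : ℂ) * Complex.exp (Complex.I * ((2*θ : ℝ) : ℂ)) := by
    have := aux_pow 2 ρ θ; push_cast at this ⊢; linear_combination this
  have h4 : ((ρ:ℂ) * Complex.exp (Complex.I * θ))^4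
      = ((ρ^4 : ℝ) : ℂ) * Complex.exp (Complex.I * ((4*θ : ℝ) : ℂ)) := by
    have := aux_pow 4 ρ θ; push_cast at this ⊢; linear_combination this
  have hinv : 1 / ((x:ℂ) * ((ρ:ℂ) * Complex.exp (Complex.I * θ)))
      = (((x*ρ)⁻¹ : ℝ) : ℂ) * Complex.exp (Complex.I * ((-θ : ℝ) : ℂ)) := by
    have h : (x:ℂ) * ((ρ:ℂ) * Complex.exp (Complex.I * θ))
        = ((x*ρ : ℝ):ℂ) * Complex.exp (Complex.I * θ) := by push_cast; ring
    rw [h, one_div, mul_inv, ← Complex.exp_neg]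
    push_cast
    ring_nf
  rw [h2, h4, hinv]
  have hreI : (Complex.I * (((ρ^4 : ℝ) : ℂ) * Complex.exp (Complex.I * ((4*θ:ℝ):ℂ)))).re
      = -(ρ^4 * Real.sin (4*θ)) := by
    rw [Complex.mul_re, Complex.I_re, Complex.I_im, aux_im, aux_re]; ring
  rw [Complex.add_re, Complex.sub_re, Complex.neg_re, aux_re, aux_re, hreI]
  have hc2 : 0 ≤ Real.cos (2*θ) := Real.cos_nonneg_of_mem_Icc ⟨by linarith [pi_pos], by linarith [pi_pos]⟩
  have hcn : 0 ≤ Real.cos (-θ) := Real.cos_nonneg_of_mem_Icc ⟨by linarith [pi_pos], by linarith [pi_pos]⟩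
  have hs4 : 0 ≤ Real.sin (4*θ) := Real.sin_nonneg_of_nonneg_of_le_pi (by linarith) (by linarith [pi_pos])
  have h1 : 0 ≤ ρ^2 * Real.cos (2*θ) := by positivity
  have h2' : 0 ≤ (x*ρ)⁻¹ * Real.cos (-θ) := by positivity
  have h3 : 0 ≤ ρ^4 * Real.sin (4*θ) := by positivity
  linarith

lemma Fx_norm_le {x ρ θ : ℝ} (hx : 0 < x) (hρ : 0 < ρ) (hθ0 : 0 ≤ θ) (hθ1 : θ ≤ π/8) :
    ‖Fx x ((ρ:ℂ) * Complex.exp (Complex.I * θ))‖ ≤ (ρ^2)⁻¹ := by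
  set z : ℂ := (ρ:ℂ) * Complex.exp (Complex.I * θ) with hz
  have hnz : ‖z‖ = ρ := by
    rw [hz, norm_mul, Complex.norm_real,
      Complex.norm_exp]
    simp [abs_of_pos hρ]
  have hexp : ‖Complex.exp (-z ^ 2 - 1 / ((x:ℂ) * z) + Complex.I * z ^ 4)‖ ≤ 1 := by
    rw [Complex.norm_exp]
    exact Real.exp_le_one_iff.mpr (aux_rebound hx hρ hθ0 hθ1)
  calc ‖Fx x z‖ = ‖(z^2)⁻¹‖ * ‖Complex.exp (-z ^ 2 - 1 / ((x:ℂ) * z) + Complex.I * z ^ 4)‖ := by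
        rw [Fx, norm_mul]
    _ ≤ ‖(z^2)⁻¹‖ * 1 := by
        exact mul_le_mul_of_nonneg_left hexp (norm_nonneg _)
    _ = (ρ^2)⁻¹ := by
        rw [mul_one, norm_inv, norm_pow, hnz]

lemma Fx_differentiableAt {x : ℝ} (hx : x ≠ 0) {z : ℂ} (hz : z ≠ 0) :
    DifferentiableAt ℂ (Fx x) z := by
  have hxz : (x:ℂ) * z ≠ 0 := mul_ne_zero (Complex.ofReal_ne_zero.mpr hx) hz
  have h1 : DifferentiableAt ℂ (fun z : ℂ => (z ^ 2)⁻¹) z :=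
    (differentiableAt_id.pow 2).inv (pow_ne_zero 2 hz)
  have h2 : DifferentiableAt ℂ (fun z : ℂ => -z ^ 2 - 1 / ((x:ℂ) * z) + Complex.I * z ^ 4) z := by
    have ha : DifferentiableAt ℂ (fun z : ℂ => 1 / ((x:ℂ) * z)) z := by
      simp only [one_div]
      exact (differentiableAt_const _|>.mul differentiableAt_id).inv hxz
    exact (((differentiableAt_id.pow 2).neg.sub ha).add
      (differentiableAt_const _|>.mul (differentiableAt_id.pow 4)))
  exact h1.mul (Complex.differentiable_exp.differentiableAt.comp z h2)

lemma Fx_integrableOn {x θ : ℝ} (hx : 0 < x) (hθ0 : 0 ≤ θ) (hθ1 : θ ≤ π/8) :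
    IntegrableOn (fun r : ℝ => Fx x ((r:ℂ) * Complex.exp (Complex.I * θ))) (Ioi 4) := by
  have hcont : ∀ r ∈ Ioi (4:ℝ),
      ContinuousAt (fun r : ℝ => Fx x ((r:ℂ) * Complex.exp (Complex.I * θ))) r := by
    intro r hr
    have hr0 : (0:ℝ) < r := lt_trans (by norm_num) hr
    have hz : (r:ℂ) * Complex.exp (Complex.I * θ) ≠ 0 :=
      mul_ne_zero (Complex.ofReal_ne_zero.mpr hr0.ne') (Complex.exp_ne_zero _)
    have hc : ContinuousAt (fun r : ℝ => (r:ℂ) * Complex.exp (Complex.I * θ)) r :=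
      (Complex.continuous_ofReal.mul continuous_const).continuousAt
    exact ContinuousAt.comp (f := fun r : ℝ => (r:ℂ) * Complex.exp (Complex.I * θ))
      (Fx_differentiableAt hx.ne' hz).continuousAt hc
  have hmeas : AEStronglyMeasurable (fun r : ℝ => Fx x ((r:ℂ) * Complex.exp (Complex.I * θ)))
      (volume.restrict (Ioi 4)) :=
    (continuousOn_of_forall_continuousAt hcont).aestronglyMeasurable measurableSet_Ioi
  have hint : IntegrableOn (fun r : ℝ => r ^ (-2 : ℝ)) (Ioi (4:ℝ)) :=
    integrableOn_Ioi_rpow_of_lt (by norm_num) (by norm_num)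
  refine Integrable.mono hint hmeas ?_
  filter_upwards [ae_restrict_mem measurableSet_Ioi] with r hr
  have hr0 : (0:ℝ) < r := lt_trans (by norm_num) hr
  have := Fx_norm_le (ρ := r) hx hr0 hθ0 hθ1
  rw [Real.norm_eq_abs, abs_of_pos (Real.rpow_pos_of_pos hr0 _)]
  calc ‖Fx x ((r:ℂ) * Complex.exp (Complex.I * θ))‖ ≤ (r^2)⁻¹ := this
    _ = r ^ (-2:ℝ) := by
        rw [← Real.rpow_natCast r 2, ← Real.rpow_neg hr0.le]; norm_num

noncomputable def ArcI (x ρ : ℝ) : ℂ :=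
  ∫ θ in (0:ℝ)..(π/8), Fx x ((ρ:ℂ) * Complex.exp (Complex.I * θ)) *
    ((ρ:ℂ) * Complex.exp (Complex.I * θ))

lemma rect_identity {x L : ℝ} (hx : 0 < x) (hL : 4 < L) :
    (∫ r in (4:ℝ)..L, Fx x r) + Complex.I • ArcI x L
      = Complex.exp (Complex.I * ((π/8 : ℝ) : ℂ)) *
          (∫ r in (4:ℝ)..L, Fx x ((r:ℂ) * Complex.exp (Complex.I * ((π/8 : ℝ) : ℂ))))
        + Complex.I • ArcI x 4 := by
  have hL0 : (0:ℝ) < L := by linarith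
  set a : ℝ := Real.log 4 with ha
  set b : ℝ := Real.log L with hb
  set g : ℂ → ℂ := fun w => Fx x (Complex.exp w) * Complex.exp w with hg
  have hgdiff : Differentiable ℂ g := by
    intro w
    exact (DifferentiableAt.comp w (Fx_differentiableAt hx.ne' (Complex.exp_ne_zero w))
      (Complex.differentiable_exp.differentiableAt)).mul
      (Complex.differentiable_exp.differentiableAt)
  have H := Complex.integral_boundary_rect_eq_zero_of_differentiableOn g
    ((a:ℂ)) ((b:ℂ) + (π/8 : ℝ) * Complex.I) (hgdiff.differentiableOn)
  simp only [Complex.add_re, Complex.ofReal_re, Complex.mul_re, Complex.I_re, Complex.I_im,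
    Complex.ofReal_im, Complex.add_im, Complex.mul_im] at H
  norm_num at H
  have hea : Real.exp a = 4 := Real.exp_log (by norm_num)
  have heb : Real.exp b = L := Real.exp_log hL0
  have hgR : ∀ t : ℝ, g (t:ℂ) = Real.exp t • ((fun r : ℝ => Fx x (r:ℂ)) ∘ Real.exp) t := by
    intro t
    simp only [hg, Function.comp, Complex.real_smul, Complex.ofReal_exp]
    ring
  have hcont0 : ContinuousOn (fun r : ℝ => Fx x (r:ℂ)) (Real.exp '' uIcc a b) := by
    intro r hr
    obtain ⟨t, _, rfl⟩ := hr
    have h0 : ((Real.exp t : ℝ):ℂ) ≠ 0 := Complex.ofReal_ne_zero.mpr (Real.exp_pos t).ne'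
    exact (ContinuousAt.comp (f := fun r : ℝ => (r:ℂ))
      (Fx_differentiableAt hx.ne' h0).continuousAt
      Complex.continuous_ofReal.continuousAt).continuousWithinAt
  have e1 : (∫ t in a..b, g (t:ℂ)) = ∫ r in (4:ℝ)..L, Fx x (r:ℂ) := by
    rw [show (∫ t in a..b, g (t:ℂ)) = ∫ t in a..b, Real.exp t •
        ((fun r : ℝ => Fx x (r:ℂ)) ∘ Real.exp) t from intervalIntegral.integral_congr
        (fun t _ => hgR t),
      intervalIntegral.integral_comp_smul_deriv' (fun t _ => Real.hasDerivAt_exp t)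
        Real.continuous_exp.continuousOn hcont0, hea, heb]
  set e8 : ℂ := Complex.exp (Complex.I * ((π/8 : ℝ) : ℂ)) with he8
  have hgT : ∀ t : ℝ, g ((t:ℂ) + (π:ℂ)/8 * Complex.I)
      = Real.exp t • ((fun r : ℝ => Fx x ((r:ℂ) * e8) * e8) ∘ Real.exp) t := by
    intro t
    have harg : ((t:ℂ) + (π:ℂ)/8 * Complex.I) = (t:ℂ) + Complex.I * ((π/8 : ℝ) : ℂ) := by
      push_cast; ring
    simp only [hg, Function.comp, Complex.real_smul, harg, Complex.exp_add, he8,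
      Complex.ofReal_exp]
    ring
  have hcont1 : ContinuousOn (fun r : ℝ => Fx x ((r:ℂ) * e8) * e8) (Real.exp '' uIcc a b) := by
    intro r hr
    obtain ⟨t, _, rfl⟩ := hr
    have h0 : ((Real.exp t : ℝ):ℂ) * e8 ≠ 0 :=
      mul_ne_zero (Complex.ofReal_ne_zero.mpr (Real.exp_pos t).ne') (Complex.exp_ne_zero _)
    exact ((ContinuousAt.comp (f := fun r : ℝ => (r:ℂ) * e8)
      (Fx_differentiableAt hx.ne' h0).continuousAt
      (Complex.continuous_ofReal.mul continuous_const).continuousAt).mul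
      continuousAt_const).continuousWithinAt
  have e2 : (∫ t in a..b, g ((t:ℂ) + (π:ℂ)/8 * Complex.I))
      = e8 * ∫ r in (4:ℝ)..L, Fx x ((r:ℂ) * e8) := by
    rw [show (∫ t in a..b, g ((t:ℂ) + (π:ℂ)/8 * Complex.I)) = ∫ t in a..b, Real.exp t •
        ((fun r : ℝ => Fx x ((r:ℂ) * e8) * e8) ∘ Real.exp) t from
        intervalIntegral.integral_congr (fun t _ => hgT t),
      intervalIntegral.integral_comp_smul_deriv' (fun t _ => Real.hasDerivAt_exp t)
        Real.continuous_exp.continuousOn hcont1, hea, heb,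
      intervalIntegral.integral_mul_const, mul_comm]
  have hgV : ∀ (c y : ℝ), g ((c:ℂ) + (y:ℂ) * Complex.I)
      = Fx x (((Real.exp c : ℝ):ℂ) * Complex.exp (Complex.I * (y:ℂ))) *
          (((Real.exp c : ℝ):ℂ) * Complex.exp (Complex.I * (y:ℂ))) := by
    intro c y
    simp only [hg, Complex.exp_add, Complex.ofReal_exp, mul_comm ((y:ℂ)) Complex.I]
  have e3 : (∫ y in (0:ℝ)..(π/8), g ((b:ℂ) + (y:ℂ) * Complex.I)) = ArcI x L := by
    rw [ArcI]
    refine intervalIntegral.integral_congr fun y _ => ?_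
    rw [hgV b y, heb]
  have e4 : (∫ y in (0:ℝ)..(π/8), g ((a:ℂ) + (y:ℂ) * Complex.I)) = ArcI x 4 := by
    rw [ArcI]
    refine intervalIntegral.integral_congr fun y _ => ?_
    rw [hgV a y, hea]
  rw [e1, e2, e3, e4] at H
  simp only [smul_eq_mul]
  linear_combination H

lemma arc_tendsto {x : ℝ} (hx : 0 < x) : Filter.Tendsto (ArcI x) Filter.atTop (nhds 0) := by
  apply squeeze_zero_norm' (a := fun L : ℝ => L⁻¹ * (π/8))
  · filter_upwards [Filter.eventually_ge_atTop (4:ℝ)] with L hL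
    have hL0 : (0:ℝ) < L := by linarith
    have hb : ∀ θ ∈ Set.uIoc (0:ℝ) (π/8), ‖Fx x ((L:ℂ) * Complex.exp (Complex.I * θ)) *
        ((L:ℂ) * Complex.exp (Complex.I * θ))‖ ≤ L⁻¹ := by
      intro θ hθ
      rw [Set.uIoc_of_le (by positivity : (0:ℝ) ≤ π/8)] at hθ
      have hnz : ‖(L:ℂ) * Complex.exp (Complex.I * θ)‖ = L := by
        rw [norm_mul, Complex.norm_real,
          Complex.norm_exp]
        simp [abs_of_pos hL0]
      rw [norm_mul, hnz]
      calc ‖Fx x ((L:ℂ) * Complex.exp (Complex.I * θ))‖ * L ≤ (L^2)⁻¹ * L :=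
            mul_le_mul_of_nonneg_right (Fx_norm_le hx hL0 hθ.1.le hθ.2) hL0.le
        _ = L⁻¹ := by field_simp
    calc ‖ArcI x L‖ ≤ L⁻¹ * |π/8 - 0| :=
          intervalIntegral.norm_integral_le_of_norm_le_const hb
      _ = L⁻¹ * (π/8) := by rw [sub_zero, abs_of_pos (by positivity)]
  · have := (tendsto_inv_atTop_zero (𝕜 := ℝ)).mul_const (π/8)
    simpa using this

theorem stmt_16 (F : ℝ → ℂ → ℂ)
    (hF : ∀ x : ℝ, ∀ z : ℂ, F x z =
      (z ^ 2)⁻¹ * Complex.exp (-z ^ 2 - 1 / ((x:ℂ) * z) + Complex.I * z ^ 4)) :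
    ∀ x : ℝ, 0 < x →
      (∫ r in Ioi (4:ℝ), F x r)
        = Complex.exp (Complex.I * Real.pi / 8) *
            (∫ r in Ioi (4:ℝ), F x ((r:ℂ) * Complex.exp (Complex.I * Real.pi / 8)))
          + ∫ θ in (0:ℝ)..(Real.pi / 8),
              F x (4 * Complex.exp (Complex.I * θ)) * (4 * Complex.I * Complex.exp (Complex.I * θ)) := by
  intro x hx
  have hFeq : F x = Fx x := funext fun z => hF x z
  have h8 : Complex.I * (Real.pi : ℂ) / 8 = Complex.I * ((π/8 : ℝ) : ℂ) := by push_cast; ring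
  rw [hFeq, h8]
  set e8 : ℂ := Complex.exp (Complex.I * ((π/8 : ℝ) : ℂ)) with he8
  have hint0 : IntegrableOn (fun r : ℝ => Fx x (r:ℂ)) (Ioi 4) := by
    have := Fx_integrableOn (θ := 0) hx le_rfl (by positivity)
    simpa using this
  have hint8 : IntegrableOn (fun r : ℝ => Fx x ((r:ℂ) * e8)) (Ioi 4) :=
    Fx_integrableOn (θ := π/8) hx (by positivity) le_rfl
  have h1 := MeasureTheory.intervalIntegral_tendsto_integral_Ioi 4 hint0 Filter.tendsto_id
  have h2 := MeasureTheory.intervalIntegral_tendsto_integral_Ioi 4 hint8 Filter.tendsto_id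
  have hA := arc_tendsto hx
  have hLHS : Filter.Tendsto
      (fun L : ℝ => (∫ r in (4:ℝ)..L, Fx x (r:ℂ)) + Complex.I • ArcI x L) Filter.atTop
      (nhds ((∫ r in Ioi (4:ℝ), Fx x (r:ℂ)) + Complex.I • (0:ℂ))) :=
    h1.add (hA.const_smul Complex.I)
  have hRHS : Filter.Tendsto
      (fun L : ℝ => e8 * (∫ r in (4:ℝ)..L, Fx x ((r:ℂ) * e8)) + Complex.I • ArcI x 4)
      Filter.atTop
      (nhds (e8 * (∫ r in Ioi (4:ℝ), Fx x ((r:ℂ) * e8)) + Complex.I • ArcI x 4)) :=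
    (h2.const_mul e8).add tendsto_const_nhds
  have hkey : (fun L : ℝ => (∫ r in (4:ℝ)..L, Fx x (r:ℂ)) + Complex.I • ArcI x L)
      =ᶠ[Filter.atTop]
      (fun L : ℝ => e8 * (∫ r in (4:ℝ)..L, Fx x ((r:ℂ) * e8)) + Complex.I • ArcI x 4) :=
    (Filter.eventually_gt_atTop 4).mono fun L hL => rect_identity hx hL
  have heq := tendsto_nhds_unique (hLHS.congr' hkey) hRHS
  rw [smul_zero, add_zero] at heq
  rw [heq]
  congr 1
  rw [ArcI, smul_eq_mul, ← intervalIntegral.integral_const_mul]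
  refine intervalIntegral.integral_congr fun θ _ => ?_
  push_cast
  ring
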